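/- Let N ≥ 3, let a ∈ C²(ℝ) with a(s) ≥ ν > 0 for all s ∈ ℝ, let k > 0 and a₁ > 0 with lim_{s→+∞} a(s)/s^k = a₁, and let g be the solution of g'(s) = 1/√(a(g(s))), g(0) = 0. If u ∈ C²(ℝ^N) satisfies u > 0 in ℝ^N, u ∈ L²(ℝ^N), |∇u| ∈ L²(ℝ^N) and a(u)|∇u|² ∈ L¹(ℝ^N), then v := g⁻¹ ∘ u satisfies v ∈ L²(ℝ^N) and |∇v| ∈ L²(ℝ^N). -/

import Mathlib

open Filter MeasureTheory Real Topology
open intervalIntegral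

namespace DFH

noncomputable def w (s : ℝ) : ℝ := max 0 ((s-1)*(2-s))

lemma w_cont : Continuous w :=
  continuous_const.max (((continuous_id.sub continuous_const)).mul
    (continuous_const.sub continuous_id))

lemma w_nonneg (s : ℝ) : 0 ≤ w s := le_max_left _ _

lemma w_le_one (s : ℝ) : w s ≤ 1 := by
  unfold w
  rcases le_or_gt ((s-1)*(2-s)) 0 with h | h
  · simpa [max_eq_left h] using zero_le_one
  · rw [max_eq_right h.le]; nlinarith [sq_nonneg (2*s-3)]

lemma w_eq_zero_of_le {s : ℝ} (hs : s ≤ 1) : w s = 0 := by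
  unfold w
  rw [max_eq_left]; nlinarith

lemma w_eq_zero_of_ge {s : ℝ} (hs : 2 ≤ s) : w s = 0 := by
  unfold w
  rw [max_eq_left]; nlinarith

noncomputable def crho : ℝ := ∫ s in (1:ℝ)..2, w s

lemma crho_pos : 0 < crho := by
  apply intervalIntegral_pos_of_pos_on (w_cont.intervalIntegrable 1 2)
  · intro x hx
    unfold w
    rw [max_eq_right]
    · nlinarith [hx.1, hx.2]
    · nlinarith [hx.1, hx.2]
  · norm_num

noncomputable def rho (t : ℝ) : ℝ := (∫ s in t..(2:ℝ), w s) / crho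

lemma rho_hasDeriv (t : ℝ) : HasDerivAt rho (-w t / crho) t := by
  have h2 : HasDerivAt (fun x => ∫ s in (2:ℝ)..x, w s) (w t) t :=
    (w_cont.integral_hasStrictDerivAt 2 t).hasDerivAt
  have h3 : HasDerivAt (fun x => ∫ s in x..(2:ℝ), w s) (-w t) t := by
    have := h2.neg
    apply this.congr_of_eventuallyEq
    filter_upwards with x using by rw [intervalIntegral.integral_symm]; rfl
  have h4 := h3.mul_const crho⁻¹
  have h5 : rho = fun y => (∫ s in y..(2:ℝ), w s) * crho⁻¹ := by
    funext y; simp [rho, div_eq_mul_inv]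
  rw [h5, div_eq_mul_inv]; exact h4

lemma rho_contDiff : ContDiff ℝ 1 rho := by
  refine contDiff_one_iff_deriv.mpr ⟨fun t => (rho_hasDeriv t).differentiableAt, ?_⟩
  have : deriv rho = fun t => -w t / crho := funext fun t => (rho_hasDeriv t).deriv
  rw [this]
  exact (w_cont.neg).div_const _

lemma rho_deriv_abs (t : ℝ) : |(-w t / crho)| ≤ 1 / crho := by
  rw [abs_div, abs_of_pos crho_pos, abs_neg, abs_of_nonneg (w_nonneg t)]
  gcongr
  · exact crho_pos.le
  · exact w_le_one t

lemma rho_one {t : ℝ} (ht : t ≤ 1) : rho t = 1 := by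
  have hsplit : (∫ s in t..(1:ℝ), w s) + (∫ s in (1:ℝ)..2, w s) = ∫ s in t..(2:ℝ), w s :=
    intervalIntegral.integral_add_adjacent_intervals (w_cont.intervalIntegrable _ _)
      (w_cont.intervalIntegrable _ _)
  have h0 : (∫ s in t..(1:ℝ), w s) = 0 := by
    rw [intervalIntegral.integral_congr (g := fun _ => (0:ℝ))]
    · simp
    · intro x hx
      apply w_eq_zero_of_le
      rcases Set.mem_uIcc.mp hx with h | h
      · exact h.2
      · linarith [h.2, ht]
  rw [rho, ← hsplit, h0, zero_add]
  exact div_self crho_pos.ne'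

lemma rho_zero {t : ℝ} (ht : 2 ≤ t) : rho t = 0 := by
  have h0 : (∫ s in t..(2:ℝ), w s) = 0 := by
    rw [intervalIntegral.integral_congr (g := fun _ => (0:ℝ))]
    · simp
    · intro x hx
      apply w_eq_zero_of_ge
      rcases Set.mem_uIcc.mp hx with h | h
      · linarith [h.1]
      · exact h.1
  rw [rho, h0, zero_div]

lemma rho_nonneg (t : ℝ) : 0 ≤ rho t := by
  rcases le_or_gt t 2 with h | h
  · apply div_nonneg _ crho_pos.le
    exact intervalIntegral.integral_nonneg h (fun x _ => w_nonneg x)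
  · rw [rho_zero h.le]

lemma rho_anti : Antitone rho := by
  intro s t hst
  have hsplit : (∫ x in s..t, w x) + (∫ x in t..(2:ℝ), w x) = ∫ x in s..(2:ℝ), w x :=
    intervalIntegral.integral_add_adjacent_intervals (w_cont.intervalIntegrable _ _)
      (w_cont.intervalIntegrable _ _)
  have h1 : 0 ≤ ∫ x in s..t, w x :=
    intervalIntegral.integral_nonneg hst (fun x _ => w_nonneg x)
  unfold rho
  gcongr
  · exact crho_pos.le
  · linarith

lemma rho_le_one (t : ℝ) : rho t ≤ 1 := by
  rcases le_or_gt t 1 with h | h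
  · rw [rho_one h]
  · exact le_trans (rho_anti h.le) (le_of_eq (rho_one le_rfl))

end DFH

namespace DFH

noncomputable def psi (n : ℕ) (t : ℝ) : ℝ := max 0 (min 1 ((n:ℝ)+1-t))

lemma psi_cont (n : ℕ) : Continuous (psi n) :=
  continuous_const.max (continuous_const.min (continuous_const.sub continuous_id))

lemma psi_nonneg (n : ℕ) (t : ℝ) : 0 ≤ psi n t := le_max_left _ _

lemma psi_le_one (n : ℕ) (t : ℝ) : psi n t ≤ 1 :=
  max_le zero_le_one (min_le_left _ _)

lemma psi_mono {n m : ℕ} (h : n ≤ m) (t : ℝ) : psi n t ≤ psi m t := by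
  unfold psi
  have : (n:ℝ) + 1 - t ≤ (m:ℝ) + 1 - t := by
    have : (n:ℝ) ≤ (m:ℝ) := Nat.cast_le.mpr h
    linarith
  exact max_le_max le_rfl (min_le_min le_rfl this)

lemma psi_one (n : ℕ) {t : ℝ} (ht : t ≤ (n:ℝ)) : psi n t = 1 := by
  unfold psi
  rw [min_eq_left (by linarith), max_eq_right zero_le_one]

lemma psi_zero (n : ℕ) {t : ℝ} (ht : (n:ℝ)+1 ≤ t) : psi n t = 0 := by
  unfold psi
  rw [max_eq_left]
  exact le_trans (min_le_right _ _) (by linarith)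

noncomputable def Tr (n : ℕ) (s : ℝ) : ℝ := ∫ t in (0:ℝ)..s, psi n t

lemma Tr_hasDeriv (n : ℕ) (s : ℝ) : HasDerivAt (Tr n) (psi n s) s :=
  ((psi_cont n).integral_hasStrictDerivAt 0 s).hasDerivAt

lemma Tr_contDiff (n : ℕ) : ContDiff ℝ 1 (Tr n) := by
  refine contDiff_one_iff_deriv.mpr ⟨fun t => (Tr_hasDeriv n t).differentiableAt, ?_⟩
  have : deriv (Tr n) = psi n := funext fun t => (Tr_hasDeriv n t).deriv
  rw [this]; exact psi_cont n

lemma Tr_nonneg (n : ℕ) {s : ℝ} (hs : 0 ≤ s) : 0 ≤ Tr n s :=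
  intervalIntegral.integral_nonneg hs (fun x _ => psi_nonneg n x)

lemma Tr_le_self (n : ℕ) {s : ℝ} (hs : 0 ≤ s) : Tr n s ≤ s := by
  have : Tr n s ≤ ∫ t in (0:ℝ)..s, (1:ℝ) := by
    apply intervalIntegral.integral_mono_on hs ((psi_cont n).intervalIntegrable _ _)
      (continuous_const.intervalIntegrable _ _)
    exact fun x _ => psi_le_one n x
  simpa using this

lemma Tr_eq_self (n : ℕ) {s : ℝ} (hs : 0 ≤ s) (hsn : s ≤ (n:ℝ)) : Tr n s = s := by
  unfold Tr
  rw [intervalIntegral.integral_congr (g := fun _ => (1:ℝ))]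
  · simp
  · intro x hx
    rw [Set.uIcc_of_le hs] at hx
    exact psi_one n (le_trans hx.2 hsn)

lemma Tr_le (n : ℕ) {s : ℝ} (hs : 0 ≤ s) : Tr n s ≤ (n:ℝ) + 1 := by
  rcases le_or_gt s ((n:ℝ)+1) with h | h
  · exact le_trans (Tr_le_self n hs) h
  · have hsplit : (∫ t in (0:ℝ)..((n:ℝ)+1), psi n t) + (∫ t in ((n:ℝ)+1)..s, psi n t)
        = Tr n s :=
      intervalIntegral.integral_add_adjacent_intervals
        ((psi_cont n).intervalIntegrable _ _) ((psi_cont n).intervalIntegrable _ _)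
    have h2 : (∫ t in ((n:ℝ)+1)..s, psi n t) = 0 := by
      rw [intervalIntegral.integral_congr (g := fun _ => (0:ℝ))]
      · simp
      · intro x hx
        rw [Set.uIcc_of_le h.le] at hx
        exact psi_zero n hx.1
    have h3 : (∫ t in (0:ℝ)..((n:ℝ)+1), psi n t) ≤ (n:ℝ)+1 := by
      have := Tr_le_self n (s := (n:ℝ)+1) (by positivity)
      simpa [Tr] using this
    linarith

lemma Tr_mono_n {s : ℝ} (hs : 0 ≤ s) : Monotone (fun n => Tr n s) := by
  intro n m h
  exact intervalIntegral.integral_mono_on hs ((psi_cont n).intervalIntegrable _ _)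
    ((psi_cont m).intervalIntegrable _ _) (fun x _ => psi_mono h x)

lemma Tr_tendsto {s : ℝ} (hs : 0 ≤ s) : Tendsto (fun n => Tr n s) atTop (𝓝 s) := by
  have h : (fun _ : ℕ => s) =ᶠ[atTop] (fun n => Tr n s) := by
    filter_upwards [eventually_ge_atTop ⌈s⌉₊] with n hn
    exact (Tr_eq_self n hs (le_trans (Nat.le_ceil s) (Nat.cast_le.mpr hn))).symm
  exact Tendsto.congr' h tendsto_const_nhds

end DFH

namespace DFH
variable {N : ℕ}

noncomputable def chi (m : ℕ) (x : EuclideanSpace ℝ (Fin N)) : ℝ :=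
  rho (‖x‖^2 / ((m:ℝ)+1)^2)

lemma chi_contDiff (m : ℕ) : ContDiff ℝ 1 (chi (N := N) m) :=
  rho_contDiff.comp ((contDiff_norm_sq ℝ (n := 1)).div_const _)

lemma chi_nonneg (m : ℕ) (x : EuclideanSpace ℝ (Fin N)) : 0 ≤ chi m x := rho_nonneg _

lemma chi_le_one (m : ℕ) (x : EuclideanSpace ℝ (Fin N)) : chi m x ≤ 1 := rho_le_one _

lemma chi_mono (x : EuclideanSpace ℝ (Fin N)) : Monotone (fun m => chi m x) := by
  intro n m h
  apply rho_anti
  apply div_le_div_of_nonneg_left (sq_nonneg _) (by positivity)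
  have : (n:ℝ) ≤ (m:ℝ) := Nat.cast_le.mpr h
  nlinarith [Nat.cast_nonneg (α := ℝ) n]

lemma chi_eq_one {m : ℕ} {x : EuclideanSpace ℝ (Fin N)} (h : ‖x‖ ≤ (m:ℝ)+1) :
    chi m x = 1 := by
  apply rho_one
  rw [div_le_one (by positivity)]
  nlinarith [norm_nonneg x]

lemma chi_tendsto (x : EuclideanSpace ℝ (Fin N)) :
    Tendsto (fun m => chi m x) atTop (𝓝 1) := by
  have h : (fun _ : ℕ => (1:ℝ)) =ᶠ[atTop] (fun m => chi m x) := by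
    filter_upwards [eventually_ge_atTop ⌈‖x‖⌉₊] with m hm
    refine (chi_eq_one ?_).symm
    calc ‖x‖ ≤ (⌈‖x‖⌉₊ : ℝ) := Nat.le_ceil _
    _ ≤ (m:ℝ) := Nat.cast_le.mpr hm
    _ ≤ (m:ℝ)+1 := by linarith
  exact Tendsto.congr' h tendsto_const_nhds

lemma chi_hasCompactSupport (m : ℕ) : HasCompactSupport (chi (N := N) m) := by
  apply HasCompactSupport.intro (isCompact_closedBall (0 : EuclideanSpace ℝ (Fin N)) (2*((m:ℝ)+1)))
  intro x hx
  simp only [Metric.mem_closedBall, dist_zero_right, not_le] at hx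
  apply rho_zero
  rw [le_div_iff₀ (by positivity)]
  nlinarith [hx, Nat.cast_nonneg (α := ℝ) m]

lemma chi_hasFDerivAt (m : ℕ) (x : EuclideanSpace ℝ (Fin N)) :
    HasFDerivAt (chi m)
      ((-w (‖x‖^2 / ((m:ℝ)+1)^2) / crho) •
        ((((m:ℝ)+1)^2)⁻¹ • (2 • (innerSL ℝ x)))) x := by
  have h1 : HasFDerivAt (fun y : EuclideanSpace ℝ (Fin N) => ‖y‖^2 / ((m:ℝ)+1)^2)
      ((((m:ℝ)+1)^2)⁻¹ • (2 • (innerSL ℝ x))) x := by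
    have h0 : HasFDerivAt (fun y : EuclideanSpace ℝ (Fin N) => ‖y‖^2)
        (2 • (innerSL ℝ x)) x := (hasStrictFDerivAt_norm_sq x).hasFDerivAt
    have h2 := h0.const_smul ((((m:ℝ)+1)^2)⁻¹)
    have heq : (fun y : EuclideanSpace ℝ (Fin N) => ((((m:ℝ)+1)^2)⁻¹) • ‖y‖^2)
        = (fun y : EuclideanSpace ℝ (Fin N) => ‖y‖^2 / ((m:ℝ)+1)^2) := by
      funext y
      rw [smul_eq_mul, div_eq_inv_mul]
    rw [← heq]; exact h2
  exact (rho_hasDeriv _).comp_hasFDerivAt x h1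

lemma norm_aux (x : EuclideanSpace ℝ (Fin N)) : ‖(2 : ℕ) • (innerSL ℝ x)‖ ≤ 2 * ‖x‖ := by
  rw [two_smul]
  refine le_trans (norm_add_le _ _) ?_
  rw [innerSL_apply_norm]
  ring_nf
  exact le_refl _

lemma chi_fderiv_bound (m : ℕ) (x : EuclideanSpace ℝ (Fin N)) :
    ‖fderiv ℝ (chi m) x‖ ≤ (2*Real.sqrt 2/crho) / ((m:ℝ)+1) := by
  have hcr := crho_pos
  set c : ℝ := (m:ℝ)+1 with hc
  have hcpos : (0:ℝ) < c := by positivity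
  rw [(chi_hasFDerivAt m x).fderiv]
  rcases le_or_gt (‖x‖^2) (2*c^2) with h | h
  · have hxle : ‖x‖ ≤ Real.sqrt 2 * c := by
      have h1 := Real.sqrt_le_sqrt h
      rwa [Real.sqrt_sq (norm_nonneg x), Real.sqrt_mul (by norm_num) (c^2),
        Real.sqrt_sq hcpos.le] at h1
    calc ‖_‖ ≤ |(-w (‖x‖^2 / c^2) / crho)| * ((c^2)⁻¹ * (2*‖x‖)) := by
          rw [norm_smul, norm_smul, Real.norm_eq_abs, Real.norm_eq_abs,
            abs_of_pos (show (0:ℝ) < (c^2)⁻¹ by positivity)]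
          exact mul_le_mul_of_nonneg_left
            (mul_le_mul_of_nonneg_left (norm_aux x) (by positivity)) (abs_nonneg _)
    _ ≤ (1/crho) * ((c^2)⁻¹ * (2*(Real.sqrt 2 * c))) := by
          refine mul_le_mul (rho_deriv_abs _)
            (mul_le_mul_of_nonneg_left (by linarith) (by positivity))
            (by positivity) (div_nonneg zero_le_one hcr.le)
    _ = (2*Real.sqrt 2/crho) / c := by
          rw [show (c^2)⁻¹ * (2*(Real.sqrt 2 * c)) = (2*Real.sqrt 2)/c by
            field_simp]
          field_simp
  · have hw : w (‖x‖^2 / c^2) = 0 := by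
      apply w_eq_zero_of_ge
      rw [le_div_iff₀ (by positivity)]
      linarith
    rw [hw]
    simp only [neg_zero, zero_div, zero_smul, norm_zero]
    positivity

end DFH


section Main
variable {a : ℝ → ℝ} {ν : ℝ} (hν : 0 < ν)
  (hbound : ∀ s, ν ≤ a s)
  {g : ℝ → ℝ}
  (hg : ∀ s, HasDerivAt g (1 / Real.sqrt (a (g s))) s)
  (hbij : Function.Bijective g)

include hν hbound hg hbij in
lemma inv_deriv : ∀ y, HasDerivAt (Function.invFun g) (Real.sqrt (a y)) y := by
  intro y
  set h := Function.invFun g with hh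
  have hgh : ∀ z, g (h z) = z := fun z => Function.rightInverse_invFun hbij.surjective z
  have hapos : ∀ s, 0 < a s := fun s => lt_of_lt_of_le hν (hbound s)
  have hsq : ∀ s, 0 < Real.sqrt (a s) := fun s => Real.sqrt_pos.mpr (hapos s)
  have hdiff : Differentiable ℝ g := fun s => (hg s).differentiableAt
  have hgm : StrictMono g := by
    apply strictMono_of_deriv_pos
    intro s
    rw [(hg s).deriv]
    exact div_pos one_pos (hsq _)
  have hhc : Continuous h := by
    have := OrderIso.continuous (hgm.orderIsoOfSurjective g hbij.surjective).symm
    have heq : h = ⇑(hgm.orderIsoOfSurjective g hbij.surjective).symm := by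
      funext z
      apply hbij.injective
      rw [hgh z]
      exact (StrictMono.orderIsoOfSurjective_self_symm_apply g hgm hbij.surjective z).symm
    rwa [heq]
  have key : HasDerivAt h (1 / Real.sqrt (a (g (h y))))⁻¹ y := by
    apply HasDerivAt.of_local_left_inverse hhc.continuousAt (hg (h y))
    · exact ne_of_gt (div_pos one_pos (hsq _))
    · exact Eventually.of_forall hgh
  rw [hgh y] at key
  simpa [one_div, inv_inv] using key
end Main

section L2part
open Filter MeasureTheory Real Topology Module
open scoped NNReal ENNReal

namespace DFH

lemma nnnorm_mono_real {a b : ℝ} (ha : 0 ≤ a) (hab : a ≤ b) : ‖a‖₊ ≤ ‖b‖₊ := by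
  rw [← NNReal.coe_le_coe]
  simp only [coe_nnnorm, Real.norm_eq_abs]
  rw [abs_of_nonneg ha, abs_of_nonneg (ha.trans hab)]
  exact hab

lemma sq_lint_lt_top {α : Type*} [MeasurableSpace α] {μ : Measure α} {f : α → ℝ}
    (hf : MemLp f 2 μ) : ∫⁻ x, (‖f x‖₊ : ℝ≥0∞)^(2:ℝ) ∂μ < ⊤ := by
  have h := hf.2
  rw [eLpNorm_eq_lintegral_rpow_enorm_toReal two_ne_zero ENNReal.ofNat_ne_top] at h
  have h2 : (2:ℝ≥0∞).toReal = (2:ℝ) := by simp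
  rw [h2] at h
  rw [← ENNReal.rpow_lt_top_iff_of_pos (show (0:ℝ) < 1/2 by norm_num)]
  exact h

lemma memL2_of_sobolev {N : ℕ} (hN : 3 ≤ N)
    (u v : EuclideanSpace ℝ (Fin N) → ℝ)
    (hv : ContDiff ℝ 1 v) (hvpos : ∀ x, 0 < v x)
    (hucont : Continuous u) (hupos : ∀ x, 0 < u x)
    (huL2 : MemLp u 2 volume)
    (C₁ : ℝ) (hC₁ : 0 ≤ C₁) (hbd : ∀ x, u x ≤ 1 → v x ≤ C₁ * u x)
    (hgrad : eLpNorm (fderiv ℝ v) 2 volume ≠ ⊤) :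
    MemLp v 2 volume := by
  classical
  have hvc : Continuous v := hv.continuous
  -- the superlevel set
  set S : Set (EuclideanSpace ℝ (Fin N)) := {x | 1 < u x} with hS
  have hSm : MeasurableSet S := measurableSet_lt measurable_const hucont.measurable
  have hμS : volume S < ⊤ := by
    have hsub : S ⊆ {x | (1:ℝ≥0) ≤ ‖u x‖₊} := by
      intro x hx
      simp only [Set.mem_setOf_eq] at hx ⊢
      rw [← NNReal.coe_le_coe, coe_nnnorm, Real.norm_eq_abs, NNReal.coe_one]
      exact le_trans hx.le (le_abs_self _)
    exact lt_of_le_of_lt (measure_mono hsub)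
      (huL2.meas_ge_lt_top two_ne_zero ENNReal.ofNat_ne_top one_ne_zero)
  -- truncations
  set vb : ℕ → EuclideanSpace ℝ (Fin N) → ℝ := fun n x => Tr n (v x) with hvb
  have hvb_nonneg : ∀ n x, 0 ≤ vb n x := fun n x => Tr_nonneg n (hvpos x).le
  have hvb_le_v : ∀ n x, vb n x ≤ v x := fun n x => Tr_le_self n (hvpos x).le
  have hvb_le : ∀ n x, vb n x ≤ (n:ℝ)+1 := fun n x => Tr_le n (hvpos x).le
  have hvbC1 : ∀ n, ContDiff ℝ 1 (vb n) := fun n => (Tr_contDiff n).comp hv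
  have hvbcont : ∀ n, Continuous (vb n) := fun n => (hvbC1 n).continuous
  -- truncations are in L²
  have hMn : ∀ n, MemLp (vb n) 2 volume := by
    intro n
    have hbig : MemLp ((fun x => C₁ * u x) + S.indicator (fun _ => (n:ℝ)+1)) 2 volume :=
      (huL2.const_mul C₁).add (memLp_indicator_const 2 hSm _ (Or.inr hμS.ne))
    refine hbig.of_le (hvbcont n).aestronglyMeasurable (ae_of_all _ fun x => ?_)
    rw [Real.norm_of_nonneg (hvb_nonneg n x), Pi.add_apply]
    have hind_nonneg : 0 ≤ S.indicator (fun _ : EuclideanSpace ℝ (Fin N) => (n:ℝ)+1) x :=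
      Set.indicator_nonneg (fun _ _ => by positivity) x
    have hCu_nonneg : 0 ≤ C₁ * u x := mul_nonneg hC₁ (hupos x).le
    have hle : vb n x ≤ C₁ * u x + S.indicator (fun _ => (n:ℝ)+1) x := by
      rcases le_or_gt (u x) 1 with h1 | h1
      · have := le_trans (hvb_le_v n x) (hbd x h1)
        linarith
      · have hxS : x ∈ S := h1
        rw [Set.indicator_of_mem hxS]
        have := hvb_le n x
        linarith
    exact le_trans hle (le_abs_self _)
  -- Sobolev exponent
  have hN2 : (2:ℝ) < (N:ℝ) := by exact_mod_cast (by omega : 2 < N)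
  have hNpos : (0:ℝ) < (N:ℝ) := by linarith
  set q' : ℝ≥0 := Real.toNNReal (2*(N:ℝ)/((N:ℝ)-2)) with hq'
  have hq'coe : (q' : ℝ) = 2*(N:ℝ)/((N:ℝ)-2) :=
    Real.coe_toNNReal _ (div_nonneg (by positivity) (by linarith))
  have hq'pos : (0:ℝ) < (q' : ℝ) := by
    rw [hq'coe]
    apply div_pos (by positivity) (by linarith)
  have hq'0 : q' ≠ 0 := by
    intro h
    rw [h] at hq'pos; simp at hq'pos
  have hq'2 : (2:ℝ) ≤ (q' : ℝ) := by
    rw [hq'coe, le_div_iff₀ (by linarith)]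
    linarith
  have hp' : ((q' : ℝ))⁻¹ = (((2:ℝ≥0)) : ℝ)⁻¹
      - ((finrank ℝ (EuclideanSpace ℝ (Fin N)) : ℝ))⁻¹ := by
    rw [hq'coe, show ((finrank ℝ (EuclideanSpace ℝ (Fin N)) : ℝ)) = (N:ℝ) by
      rw [finrank_euclideanSpace_fin]]
    rw [NNReal.coe_ofNat]
    rw [inv_div, inv_sub_inv (by norm_num : (2:ℝ) ≠ 0) (by linarith : (N:ℝ) ≠ 0)]
  -- gradient bound for truncations
  have hvb_fderiv : ∀ n x, ‖fderiv ℝ (vb n) x‖ ≤ ‖fderiv ℝ v x‖ := by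
    intro n x
    have hval : HasFDerivAt (vb n) (psi n (v x) • fderiv ℝ v x) x :=
      (Tr_hasDeriv n (v x)).comp_hasFDerivAt x (hv.differentiable one_ne_zero x).hasFDerivAt
    rw [hval.fderiv, norm_smul, Real.norm_eq_abs, abs_of_nonneg (psi_nonneg n (v x))]
    calc psi n (v x) * ‖fderiv ℝ v x‖ ≤ 1 * ‖fderiv ℝ v x‖ := by
          gcongr
          exact psi_le_one n (v x)
    _ = _ := one_mul _
  set A' : ℝ≥0∞ := eLpNorm (fderiv ℝ v) 2 volume with hA'
  set SC : ℝ≥0 := eLpNormLESNormFDerivOfEqInnerConst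
      (volume : Measure (EuclideanSpace ℝ (Fin N))) 2 with hSC
  set Kc : ℝ := 2*Real.sqrt 2/crho with hKc
  set D' : ℝ≥0∞ := ((SC : ℝ≥0∞) * A') ^ (q' : ℝ) with hD'
  have hD'top : D' ≠ ⊤ :=
    ENNReal.rpow_ne_top_of_nonneg hq'pos.le
      (ENNReal.mul_ne_top ENNReal.coe_ne_top hgrad)
  have hfdvcont : Continuous (fderiv ℝ v) := hv.continuous_fderiv one_ne_zero
  have hJn : ∀ n, ∫⁻ x, ((‖vb n x‖₊ : ℝ≥0∞)) ^ (q' : ℝ) ≤ D' := by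
    intro n
    set En : ℝ≥0∞ := eLpNorm (vb n) 2 volume with hEn
    have hEntop : En ≠ ⊤ := (hMn n).eLpNorm_lt_top.ne
    have key : ∀ m : ℕ, ∫⁻ x, ((‖chi m x * vb n x‖₊ : ℝ≥0∞)) ^ (q' : ℝ)
        ≤ ((SC : ℝ≥0∞) * (A' + (‖Kc/((m:ℝ)+1)‖₊ : ℝ≥0∞) * En)) ^ (q' : ℝ) := by
      intro m
      set wm : EuclideanSpace ℝ (Fin N) → ℝ := fun x => chi m x * vb n x with hwm
      have hwC1 : ContDiff ℝ 1 wm := (chi_contDiff m).mul (hvbC1 n)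
      have hwsupp : HasCompactSupport wm := (chi_hasCompactSupport m).mul_right
      have hsob := eLpNorm_le_eLpNorm_fderiv_of_eq_inner volume hwC1 hwsupp
        one_le_two (by rw [finrank_euclideanSpace_fin]; omega) hp'
      have hfdw : ∀ x, ‖fderiv ℝ wm x‖ ≤
          ‖((fun x => ‖fderiv ℝ v x‖) + (fun x => (Kc/((m:ℝ)+1)) * vb n x)) x‖ := by
        intro x
        have h1 : HasFDerivAt wm
            (chi m x • fderiv ℝ (vb n) x + vb n x • fderiv ℝ (chi m) x) x :=
          (((chi_contDiff m).differentiable one_ne_zero x).hasFDerivAt).mul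
            (((hvbC1 n).differentiable one_ne_zero x).hasFDerivAt)
        rw [h1.fderiv]
        have hb1 : ‖chi m x • fderiv ℝ (vb n) x‖ ≤ ‖fderiv ℝ v x‖ := by
          rw [norm_smul, Real.norm_eq_abs, abs_of_nonneg (chi_nonneg m x)]
          calc chi m x * ‖fderiv ℝ (vb n) x‖ ≤ 1 * ‖fderiv ℝ v x‖ :=
                mul_le_mul (chi_le_one m x) (hvb_fderiv n x) (norm_nonneg _) zero_le_one
          _ = _ := one_mul _
        have hb2 : ‖vb n x • fderiv ℝ (chi m) x‖ ≤ (Kc/((m:ℝ)+1)) * vb n x := by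
          rw [norm_smul, Real.norm_eq_abs, abs_of_nonneg (hvb_nonneg n x), mul_comm]
          exact mul_le_mul_of_nonneg_right (chi_fderiv_bound m x) (hvb_nonneg n x)
        have hnn : 0 ≤ ‖fderiv ℝ v x‖ + (Kc/((m:ℝ)+1)) * vb n x := by
          have h2 : (0:ℝ) ≤ (Kc/((m:ℝ)+1)) * vb n x :=
            le_trans (norm_nonneg _) hb2
          positivity
        rw [Pi.add_apply, Real.norm_of_nonneg hnn]
        calc ‖_‖ ≤ ‖chi m x • fderiv ℝ (vb n) x‖ + ‖vb n x • fderiv ℝ (chi m) x‖ :=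
              norm_add_le _ _
        _ ≤ _ := add_le_add hb1 hb2
      have hmono : eLpNorm (fderiv ℝ wm) 2 volume ≤
          eLpNorm ((fun x => ‖fderiv ℝ v x‖) + (fun x => (Kc/((m:ℝ)+1)) * vb n x)) 2 volume :=
        eLpNorm_mono hfdw
      have hsmul : (fun x => (Kc/((m:ℝ)+1)) * vb n x) = (Kc/((m:ℝ)+1)) • (vb n) := by
        funext x
        simp [smul_eq_mul]
      have hadd : eLpNorm ((fun x => ‖fderiv ℝ v x‖) + (fun x => (Kc/((m:ℝ)+1)) * vb n x))
            2 volume ≤ A' + (‖Kc/((m:ℝ)+1)‖₊ : ℝ≥0∞) * En := by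
        refine le_trans (eLpNorm_add_le (hfdvcont.norm.aestronglyMeasurable)
          ((continuous_const.mul (hvbcont n)).aestronglyMeasurable) one_le_two) ?_
        rw [eLpNorm_norm, hsmul, eLpNorm_const_smul]
        exact le_rfl
      have hlp : eLpNorm wm q' volume
          ≤ (SC : ℝ≥0∞) * (A' + (‖Kc/((m:ℝ)+1)‖₊ : ℝ≥0∞) * En) := by
        refine le_trans hsob ?_
        exact mul_le_mul_right (le_trans hmono hadd) _
      have hIm : ∫⁻ x, ((‖wm x‖₊ : ℝ≥0∞)) ^ (q' : ℝ)
          = (eLpNorm wm q' volume) ^ (q' : ℝ) := by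
        rw [eLpNorm_nnreal_eq_lintegral hq'0, ← ENNReal.rpow_mul, one_div,
          inv_mul_cancel₀ (ne_of_gt hq'pos), ENNReal.rpow_one]
        rfl
      rw [hIm]
      exact ENNReal.rpow_le_rpow hlp hq'pos.le
    -- monotone convergence in the cutoff parameter
    have hcontf : ∀ (f : EuclideanSpace ℝ (Fin N) → ℝ), Continuous f →
        Continuous (fun x => ((‖f x‖₊ : ℝ≥0∞)) ^ (q' : ℝ)) := by
      intro f hf
      exact (ENNReal.continuous_rpow_const).comp
        (ENNReal.continuous_coe.comp (continuous_nnnorm.comp hf))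
    have hmct : Tendsto (fun m => ∫⁻ x, ((‖chi m x * vb n x‖₊ : ℝ≥0∞)) ^ (q' : ℝ)) atTop
        (𝓝 (∫⁻ x, ((‖vb n x‖₊ : ℝ≥0∞)) ^ (q' : ℝ))) := by
      apply lintegral_tendsto_of_tendsto_of_monotone
      · intro m
        exact (hcontf _ (((chi_contDiff m).continuous).mul (hvbcont n))).aemeasurable
      · refine ae_of_all _ fun x => ?_
        intro m₁ m₂ hm
        apply ENNReal.rpow_le_rpow _ hq'pos.le
        apply ENNReal.coe_le_coe.mpr
        apply nnnorm_mono_real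
          (mul_nonneg (chi_nonneg m₁ x) (hvb_nonneg n x))
        exact mul_le_mul_of_nonneg_right (chi_mono x hm) (hvb_nonneg n x)
      · refine ae_of_all _ fun x => ?_
        have hlim : Tendsto (fun m => chi m x * vb n x) atTop (𝓝 (vb n x)) := by
          have := (chi_tendsto x).mul_const (vb n x)
          simpa using this
        exact (((ENNReal.continuous_rpow_const).comp
          (ENNReal.continuous_coe.comp (continuous_nnnorm (E := ℝ)))).tendsto (vb n x)).comp hlim
    have hrhs : Tendsto (fun m : ℕ =>
        ((SC : ℝ≥0∞) * (A' + (‖Kc/((m:ℝ)+1)‖₊ : ℝ≥0∞) * En)) ^ (q' : ℝ)) atTop (𝓝 D') := by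
      have h1 : Tendsto (fun m : ℕ => Kc/((m:ℝ)+1)) atTop (𝓝 0) := by
        apply Tendsto.div_atTop tendsto_const_nhds
        exact tendsto_atTop_add_const_right _ _ tendsto_natCast_atTop_atTop
      have h2 : Tendsto (fun m : ℕ => (‖Kc/((m:ℝ)+1)‖₊ : ℝ≥0∞)) atTop (𝓝 0) := by
        rw [show (0:ℝ≥0∞) = ((‖(0:ℝ)‖₊ : ℝ≥0∞)) by simp]
        exact (ENNReal.continuous_coe.tendsto _).comp
          ((continuous_nnnorm.tendsto _).comp h1)
      have h0 : Tendsto (fun m : ℕ => (‖Kc/((m:ℝ)+1)‖₊ : ℝ≥0∞) * En) atTop (𝓝 0) := by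
        simpa using ENNReal.Tendsto.mul_const h2 (Or.inr hEntop)
      have h3 : Tendsto (fun m : ℕ => A' + (‖Kc/((m:ℝ)+1)‖₊ : ℝ≥0∞) * En) atTop
          (𝓝 A') := by
        simpa using h0.const_add A'
      have h4 : Tendsto (fun m : ℕ => (SC : ℝ≥0∞) * (A' + (‖Kc/((m:ℝ)+1)‖₊ : ℝ≥0∞) * En))
          atTop (𝓝 ((SC : ℝ≥0∞) * A')) :=
        ENNReal.Tendsto.const_mul h3 (Or.inr ENNReal.coe_ne_top)
      exact ((ENNReal.continuous_rpow_const).tendsto _).comp h4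
    exact le_of_tendsto_of_tendsto' hmct hrhs key
  -- core uniform L² bound for truncations
  have hmeas2 : ∀ n, Measurable (fun x => (‖vb n x‖₊ : ℝ≥0∞)^(2:ℝ)) := by
    intro n
    exact ((ENNReal.continuous_rpow_const).comp
      (ENNReal.continuous_coe.comp (continuous_nnnorm.comp (hvbcont n)))).measurable
  have hmeasq : ∀ n, Measurable (fun x => (‖vb n x‖₊ : ℝ≥0∞)^(q':ℝ)) := by
    intro n
    exact ((ENNReal.continuous_rpow_const).comp
      (ENNReal.continuous_coe.comp (continuous_nnnorm.comp (hvbcont n)))).measurable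
  set K : ℝ≥0∞ := (D' + volume S) + ∫⁻ x, (‖C₁ * u x‖₊ : ℝ≥0∞)^(2:ℝ) with hKdef
  have hKtop : K ≠ ⊤ := by
    rw [hKdef]
    exact ENNReal.add_ne_top.mpr ⟨ENNReal.add_ne_top.mpr ⟨hD'top, hμS.ne⟩,
      (sq_lint_lt_top (huL2.const_mul C₁)).ne⟩
  have hcore : ∀ n, ∫⁻ x, (‖vb n x‖₊ : ℝ≥0∞)^(2:ℝ) ≤ K := by
    intro n
    have hsplit : ∫⁻ x, (‖vb n x‖₊ : ℝ≥0∞)^(2:ℝ)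
        = (∫⁻ x in S, (‖vb n x‖₊ : ℝ≥0∞)^(2:ℝ)) + ∫⁻ x in Sᶜ, (‖vb n x‖₊ : ℝ≥0∞)^(2:ℝ) :=
      (lintegral_add_compl _ hSm).symm
    have hSc : ∫⁻ x in Sᶜ, (‖vb n x‖₊ : ℝ≥0∞)^(2:ℝ)
        ≤ ∫⁻ x, (‖C₁ * u x‖₊ : ℝ≥0∞)^(2:ℝ) := by
      refine le_trans (setLIntegral_mono ?_ (fun x hx => ?_)) (setLIntegral_le_lintegral _ _)
      · exact ((ENNReal.continuous_rpow_const).comp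
          (ENNReal.continuous_coe.comp
            (continuous_nnnorm.comp (continuous_const.mul hucont)))).measurable
      · have hx1 : u x ≤ 1 := by
          simp only [hS, Set.mem_compl_iff, Set.mem_setOf_eq, not_lt] at hx
          exact hx
        apply ENNReal.rpow_le_rpow _ (by norm_num : (0:ℝ) ≤ 2)
        exact_mod_cast nnnorm_mono_real (hvb_nonneg n x)
          (le_trans (hvb_le_v n x) (hbd x hx1))
    have hpt : ∀ x ∈ S, (‖vb n x‖₊ : ℝ≥0∞)^(2:ℝ)
        ≤ (fun x => (‖vb n x‖₊ : ℝ≥0∞)^(q':ℝ) + 1) x := by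
      intro x _
      simp only
      rcases le_or_gt ((‖vb n x‖₊ : ℝ≥0∞)) 1 with h | h
      · exact le_trans (ENNReal.rpow_le_one h (by norm_num)) le_add_self
      · exact le_trans (ENNReal.rpow_le_rpow_of_exponent_le h.le hq'2) le_self_add
    have hSle : ∫⁻ x in S, (‖vb n x‖₊ : ℝ≥0∞)^(2:ℝ) ≤ D' + volume S := by
      calc ∫⁻ x in S, (‖vb n x‖₊ : ℝ≥0∞)^(2:ℝ)
          ≤ ∫⁻ x in S, ((‖vb n x‖₊ : ℝ≥0∞)^(q':ℝ) + 1) :=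
            setLIntegral_mono ((hmeasq n).add measurable_const) hpt
      _ = (∫⁻ x in S, (‖vb n x‖₊ : ℝ≥0∞)^(q':ℝ)) + volume S := by
            rw [lintegral_add_right _ measurable_const, setLIntegral_one]
      _ ≤ (∫⁻ x, (‖vb n x‖₊ : ℝ≥0∞)^(q':ℝ)) + volume S :=
            add_le_add_left (setLIntegral_le_lintegral _ _) _
      _ ≤ D' + volume S := add_le_add_left (hJn n) _
    rw [hsplit, hKdef]
    exact add_le_add hSle hSc
  -- monotone convergence in the truncation parameter
  have hfinal : ∫⁻ x, (‖v x‖₊ : ℝ≥0∞)^(2:ℝ) ≤ K := by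
    have hmct : Tendsto (fun n => ∫⁻ x, (‖vb n x‖₊ : ℝ≥0∞)^(2:ℝ)) atTop
        (𝓝 (∫⁻ x, (‖v x‖₊ : ℝ≥0∞)^(2:ℝ))) := by
      apply lintegral_tendsto_of_tendsto_of_monotone
      · exact fun n => (hmeas2 n).aemeasurable
      · refine ae_of_all _ fun x => ?_
        intro n₁ n₂ hm
        apply ENNReal.rpow_le_rpow _ (by norm_num : (0:ℝ) ≤ 2)
        apply ENNReal.coe_le_coe.mpr
        exact nnnorm_mono_real (hvb_nonneg n₁ x) (Tr_mono_n (hvpos x).le hm)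
      · refine ae_of_all _ fun x => ?_
        exact (((ENNReal.continuous_rpow_const).comp
          (ENNReal.continuous_coe.comp (continuous_nnnorm (E := ℝ)))).tendsto (v x)).comp
          (Tr_tendsto (hvpos x).le)
    exact le_of_tendsto hmct (Eventually.of_forall hcore)
  refine ⟨hvc.aestronglyMeasurable, ?_⟩
  rw [eLpNorm_eq_lintegral_rpow_enorm_toReal two_ne_zero ENNReal.ofNat_ne_top]
  have h2 : (2:ℝ≥0∞).toReal = (2:ℝ) := by simp
  rw [h2]
  exact ENNReal.rpow_lt_top_of_nonneg (by norm_num) (ne_top_of_le_ne_top hKtop hfinal)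

end DFH
end L2part


theorem dual_function_in_H1
    (N : ℕ) (hN : 3 ≤ N)
    (a : ℝ → ℝ) (ν : ℝ) (hν : 0 < ν)
    (ha : ContDiff ℝ 2 a) (hbound : ∀ s, ν ≤ a s)
    (k a₁ : ℝ) (hk : 0 < k) (ha₁ : 0 < a₁)
    (hlim : Tendsto (fun s : ℝ => a s / s ^ k) atTop (𝓝 a₁))
    (g : ℝ → ℝ)
    (hg : ∀ s, HasDerivAt g (1 / Real.sqrt (a (g s))) s) (hg0 : g 0 = 0)
    (hbij : Function.Bijective g)
    (u : EuclideanSpace ℝ (Fin N) → ℝ) (hu : ContDiff ℝ 2 u)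
    (hupos : ∀ x, 0 < u x)
    (huL2 : MemLp u 2 volume)
    (hugrad : MemLp (fun x => ‖gradient u x‖) 2 volume)
    (huX : Integrable (fun x => a (u x) * ‖gradient u x‖ ^ 2) volume) :
    MemLp (Function.invFun g ∘ u) 2 volume ∧
    MemLp (fun x => ‖gradient (Function.invFun g ∘ u) x‖) 2 volume := by
  classical
  set h : ℝ → ℝ := Function.invFun g with hh
  have hapos : ∀ s, 0 < a s := fun s => lt_of_lt_of_le hν (hbound s)
  have hd : ∀ y, HasDerivAt h (Real.sqrt (a y)) y := inv_deriv hν hbound hg hbij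
  have h0 : h 0 = 0 := by
    have := Function.leftInverse_invFun hbij.injective 0
    rwa [hg0] at this
  have hsqacont : Continuous (fun y => Real.sqrt (a y)) :=
    Real.continuous_sqrt.comp ha.continuous
  have hC1h : ContDiff ℝ 1 h := by
    refine contDiff_one_iff_deriv.mpr ⟨fun y => (hd y).differentiableAt, ?_⟩
    have : deriv h = fun y => Real.sqrt (a y) := funext fun y => (hd y).deriv
    rw [this]
    exact hsqacont
  set v : EuclideanSpace ℝ (Fin N) → ℝ := h ∘ u with hv
  have hvC1 : ContDiff ℝ 1 v := hC1h.comp (hu.of_le one_le_two)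
  have hvpos : ∀ x, 0 < v x := by
    intro x
    have hmono : StrictMono h := by
      apply strictMono_of_deriv_pos
      intro y
      rw [(hd y).deriv]
      exact Real.sqrt_pos.mpr (hapos y)
    have := hmono (hupos x)
    rwa [h0] at this
  -- gradient identity
  have hud : Differentiable ℝ u := hu.differentiable two_ne_zero
  have hgradid : ∀ x, gradient v x = Real.sqrt (a (u x)) • gradient u x := by
    intro x
    have hfd : HasFDerivAt v (Real.sqrt (a (u x)) • fderiv ℝ u x) x :=
      (hd (u x)).comp_hasFDerivAt x (hud x).hasFDerivAt
    have hfd' : fderiv ℝ v x = Real.sqrt (a (u x)) • fderiv ℝ u x := hfd.fderiv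
    simp only [gradient, hfd']
    exact (InnerProductSpace.toDual ℝ _).symm.map_smul _ _
  have hnormgrad : ∀ x, ‖gradient v x‖ = Real.sqrt (a (u x)) * ‖gradient u x‖ := by
    intro x
    rw [hgradid x, norm_smul, Real.norm_eq_abs, abs_of_nonneg (Real.sqrt_nonneg _)]
  have hgucont : Continuous (fun x => gradient u x) := by
    have : Continuous (fun x => fderiv ℝ u x) := hu.continuous_fderiv two_ne_zero
    exact ((InnerProductSpace.toDual ℝ _).symm.continuous).comp this
  have hngvcont : Continuous (fun x => ‖gradient v x‖) := by
    have heq : (fun x => ‖gradient v x‖) = fun x => Real.sqrt (a (u x)) * ‖gradient u x‖ :=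
      funext hnormgrad
    rw [heq]
    exact ((Real.continuous_sqrt.comp (ha.continuous.comp hu.continuous))).mul hgucont.norm
  have hgv2 : MemLp (fun x => ‖gradient v x‖) 2 volume := by
    refine (memLp_two_iff_integrable_sq hngvcont.aestronglyMeasurable).mpr ?_
    have heq : (fun x => ‖gradient v x‖ ^ 2) = fun x => a (u x) * ‖gradient u x‖ ^ 2 := by
      funext x
      rw [hnormgrad x, mul_pow, Real.sq_sqrt (hapos (u x)).le]
    rw [heq]
    exact huX
  refine ⟨?_, hgv2⟩
  -- the L² part
  obtain ⟨C₁, hC₁bd⟩ : ∃ C, ∀ t ∈ Set.Icc (0:ℝ) 1, ‖Real.sqrt (a t)‖ ≤ C :=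
    isCompact_Icc.exists_bound_of_continuousOn hsqacont.continuousOn
  have hC₁ : 0 ≤ C₁ :=
    le_trans (norm_nonneg _) (hC₁bd 0 ⟨le_rfl, zero_le_one⟩)
  have hbd : ∀ x, u x ≤ 1 → v x ≤ C₁ * u x := by
    intro x hx1
    have hmem : u x ∈ Set.Icc (0:ℝ) 1 := ⟨(hupos x).le, hx1⟩
    have hder : ∀ t ∈ Set.Icc (0:ℝ) 1, HasDerivWithinAt h (Real.sqrt (a t)) (Set.Icc 0 1) t :=
      fun t _ => (hd t).hasDerivWithinAt
    have := (convex_Icc (0:ℝ) 1).norm_image_sub_le_of_norm_hasDerivWithin_le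
      hder hC₁bd ⟨le_rfl, zero_le_one⟩ hmem
    rw [h0, sub_zero, sub_zero, Real.norm_eq_abs, Real.norm_eq_abs,
      abs_of_nonneg (hupos x).le] at this
    exact le_trans (le_abs_self _) this
  have hgradA : eLpNorm (fderiv ℝ v) 2 volume ≠ ⊤ := by
    have heq : eLpNorm (fderiv ℝ v) 2 volume
        = eLpNorm (fun x => ‖gradient v x‖) 2 volume := by
      rw [← eLpNorm_norm (fderiv ℝ v)]
      congr 1
      funext x
      simp only [gradient]
      rw [LinearIsometryEquiv.norm_map]
    rw [heq]
    exact hgv2.eLpNorm_lt_top.ne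
  exact DFH.memL2_of_sobolev hN u v hvC1 hvpos hu.continuous hupos huL2 C₁ hC₁ hbd hgradA
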